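/- Let α ∈ ℝ and ε ∈ {−1, 1}. Define c₂ : ℝ → ℝ by c₂(ξ) = √(ξ² + α) and c₄ : ℝ → ℝ by c₄(η) = ε·√(η² + α). Then for all ξ, η with ξ² + α > 0 and η² + α > 0, the ambitoric compatibility constraint holds: c₂''(ξ)·((ξ − η)·c₄'(η) + c₄(η) − c₂(ξ))³ + c₄''(η)·((ξ − η)·c₂'(ξ) + c₄(η) − c₂(ξ))³ = 0. -/

import Mathlib

lemma sqrt_hasDeriv (α x : ℝ) (h : 0 < x ^ 2 + α) :
    HasDerivAt (fun y : ℝ => Real.sqrt (y ^ 2 + α)) (x / Real.sqrt (x ^ 2 + α)) x := by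
  have h0 : (x ^ 2 + α) ≠ 0 := ne_of_gt h
  have h1 : HasDerivAt (fun y : ℝ => y ^ 2 + α) (2 * x) x := by
    simpa using ((hasDerivAt_pow 2 x).add_const α)
  have hs : Real.sqrt (x ^ 2 + α) ≠ 0 := by positivity
  have := h1.sqrt h0
  convert this using 1
  field_simp

lemma sqrt_hasDeriv2 (α x : ℝ) (h : 0 < x ^ 2 + α) :
    HasDerivAt (fun y : ℝ => y / Real.sqrt (y ^ 2 + α))
      (α / (Real.sqrt (x ^ 2 + α)) ^ 3) x := by
  have hs : Real.sqrt (x ^ 2 + α) ≠ 0 := by positivity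
  have hsq : Real.sqrt (x ^ 2 + α) ^ 2 = x ^ 2 + α := Real.sq_sqrt h.le
  have := (hasDerivAt_id x).div (sqrt_hasDeriv α x h) hs
  refine HasDerivAt.congr_deriv (f := fun y : ℝ => y / Real.sqrt (y ^ 2 + α)) this ?_
  field_simp
  simp only [id_eq]
  linear_combination hsq

theorem stmt_11 (α ε : ℝ) (hε : ε ∈ ({-1, 1} : Set ℝ)) (c₂ c₄ : ℝ → ℝ)
    (hc₂ : c₂ = fun ξ => Real.sqrt (ξ ^ 2 + α))
    (hc₄ : c₄ = fun η => ε * Real.sqrt (η ^ 2 + α)) :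
    ∀ ξ η : ℝ, 0 < ξ ^ 2 + α → 0 < η ^ 2 + α →
      deriv (deriv c₂) ξ * ((ξ - η) * deriv c₄ η + c₄ η - c₂ ξ) ^ 3
        + deriv (deriv c₄) η * ((ξ - η) * deriv c₂ ξ + c₄ η - c₂ ξ) ^ 3 = 0 := by
  intro ξ η hξ hη
  subst hc₂ hc₄
  have hε2 : ε ^ 2 = 1 := by rcases hε with h | h <;> subst h <;> norm_num
  have hopen : IsOpen {x : ℝ | 0 < x ^ 2 + α} := isOpen_lt continuous_const (by continuity)
  -- derivatives of c₂
  have hevξ : ∀ᶠ x in nhds ξ, 0 < x ^ 2 + α :=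
    Filter.eventually_of_mem (hopen.mem_nhds hξ) (fun x hx => hx)
  have hd2 : deriv (fun y : ℝ => Real.sqrt (y ^ 2 + α)) =ᶠ[nhds ξ]
      fun y => y / Real.sqrt (y ^ 2 + α) :=
    hevξ.mono fun x hx => (sqrt_hasDeriv α x hx).deriv
  have hc2' : deriv (fun y : ℝ => Real.sqrt (y ^ 2 + α)) ξ = ξ / Real.sqrt (ξ ^ 2 + α) :=
    (sqrt_hasDeriv α ξ hξ).deriv
  have hc2'' : deriv (deriv (fun y : ℝ => Real.sqrt (y ^ 2 + α))) ξ
      = α / (Real.sqrt (ξ ^ 2 + α)) ^ 3 := by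
    rw [hd2.deriv_eq]
    exact (sqrt_hasDeriv2 α ξ hξ).deriv
  -- derivatives of c₄
  have hevη : ∀ᶠ x in nhds η, 0 < x ^ 2 + α :=
    Filter.eventually_of_mem (hopen.mem_nhds hη) (fun x hx => hx)
  have hd4 : deriv (fun y : ℝ => ε * Real.sqrt (y ^ 2 + α)) =ᶠ[nhds η]
      fun y => ε * (y / Real.sqrt (y ^ 2 + α)) :=
    hevη.mono fun x hx => ((sqrt_hasDeriv α x hx).const_mul ε).deriv
  have hc4' : deriv (fun y : ℝ => ε * Real.sqrt (y ^ 2 + α)) η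
      = ε * (η / Real.sqrt (η ^ 2 + α)) :=
    ((sqrt_hasDeriv α η hη).const_mul ε).deriv
  have hc4'' : deriv (deriv (fun y : ℝ => ε * Real.sqrt (y ^ 2 + α))) η
      = ε * (α / (Real.sqrt (η ^ 2 + α)) ^ 3) := by
    rw [hd4.deriv_eq]
    exact ((sqrt_hasDeriv2 α η hη).const_mul ε).deriv
  rw [hc2'', hc4'', hc2', hc4']
  set S := Real.sqrt (ξ ^ 2 + α) with hSdef
  set T := Real.sqrt (η ^ 2 + α) with hTdef
  have hS0 : 0 < S := Real.sqrt_pos.mpr hξ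
  have hT0 : 0 < T := Real.sqrt_pos.mpr hη
  have hS : S ^ 2 = ξ ^ 2 + α := Real.sq_sqrt hξ.le
  have hT : T ^ 2 = η ^ 2 + α := Real.sq_sqrt hη.le
  have hA : (ξ - η) * (ε * (η / T)) + ε * T - S = (ε * (ξ * η + α) - S * T) / T := by
    field_simp
    linear_combination ε * hT
  have hB : (ξ - η) * (ξ / S) + ε * T - S = -(ε * (ε * (ξ * η + α) - S * T)) / S := by
    field_simp
    linear_combination -hS + (ξ * η + α) * hε2
  rw [hA, hB]
  have halg : ∀ K : ℝ, α / S ^ 3 * (K / T) ^ 3 + ε * (α / T ^ 3) * (-(ε * K) / S) ^ 3 = 0 := by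
    intro K
    field_simp
    linear_combination (-(α * K ^ 3) * (ε ^ 2 + 1)) * hε2
  exact halg (ε * (ξ * η + α) - S * T)
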